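/- Let U be a finite type and let C_1, …, C_p be p nonempty finite families of finite subsets of U (the clusters), and let OPT be the maximum of |S_1 ∪ … ∪ S_p| over all selections S_i ∈ C_i. Let π be a permutation of {1, …, p} (the order in which the greedy algorithm processes the clusters) and let A_1, …, A_p be subsets with A_i ∈ C_{π(i)} such that for every i and every subset S belonging to any not-yet-processed cluster C_{π(j)} with j ≥ i, one has |S \ (A_1 ∪ … ∪ A_{i−1})| ≤ |A_i \ (A_1 ∪ … ∪ A_{i−1})| (i.e., each A_i covers as many uncovered elements as possible among all available clusters). Then 2·|A_1 ∪ … ∪ A_p| ≥ OPT; that is, the greedy algorithm for the clustered maximum coverage problem is a 1/2-approximation. -/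

import Mathlib

section Aux
variable {U : Type*} [DecidableEq U] {p : ℕ} (A : Fin p → Finset U)

lemma cmcp_telescope : ∀ n, n ≤ p →
    ((Finset.univ.filter (fun t : Fin p => (t : ℕ) < n)).biUnion A).card
      = ∑ i ∈ Finset.univ.filter (fun i : Fin p => (i : ℕ) < n),
          (A i \ (Finset.univ.filter (fun t => t < i)).biUnion A).card := by
  intro n
  induction n with
  | zero => simp
  | succ n ih =>
    intro hn
    have hnp : n < p := hn
    have hstep : (Finset.univ.filter (fun t : Fin p => (t : ℕ) < n + 1))
        = insert ⟨n, hnp⟩ (Finset.univ.filter (fun t : Fin p => (t : ℕ) < n)) := by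
      ext t
      simp [Nat.lt_succ_iff_lt_or_eq, Fin.ext_iff, or_comm]
      omega
    have hmem : (⟨n, hnp⟩ : Fin p) ∉ Finset.univ.filter (fun t : Fin p => (t : ℕ) < n) := by
      simp
    have hfe : (Finset.univ.filter (fun t : Fin p => t < (⟨n, hnp⟩ : Fin p)))
        = Finset.univ.filter (fun t : Fin p => (t : ℕ) < n) := by
      ext t; simp [Fin.lt_def]
    rw [hstep, Finset.biUnion_insert, Finset.sum_insert hmem, hfe, ← ih (le_of_lt hnp)]
    have h := Finset.card_sdiff_add_card (A (⟨n, hnp⟩ : Fin p))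
      ((Finset.univ.filter (fun t : Fin p => (t : ℕ) < n)).biUnion A)
    omega

end Aux

theorem greedy_cmcp_half_approximation {U : Type*} [Fintype U] [DecidableEq U] {p : ℕ}
    (C : Fin p → Finset (Finset U)) (hC : ∀ i, (C i).Nonempty)
    (π : Equiv.Perm (Fin p)) (A : Fin p → Finset U)
    (hA : ∀ i, A i ∈ C (π i))
    (hgreedy : ∀ i j : Fin p, i ≤ j → ∀ S ∈ C (π j),
      (S \ (Finset.univ.filter (fun t => t < i)).biUnion A).card
        ≤ (A i \ (Finset.univ.filter (fun t => t < i)).biUnion A).card) :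
    ∀ f : Fin p → Finset U, (∀ j, f j ∈ C j) →
      (Finset.univ.biUnion f).card ≤ 2 * (Finset.univ.biUnion A).card := by
  intro f hf
  set G := Finset.univ.biUnion A with hG
  -- |G| = sum of gains
  have hfull : (Finset.univ.filter (fun t : Fin p => (t : ℕ) < p)) = Finset.univ := by
    ext t; simp [t.isLt]
  have hGsum : G.card = ∑ i : Fin p,
      (A i \ (Finset.univ.filter (fun t => t < i)).biUnion A).card := by
    have := cmcp_telescope A p le_rfl
    rwa [hfull] at this
  -- each f k contributes ≤ gain at step π⁻¹ k outside G
  have hkey : ∀ k : Fin p, (f k \ G).card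
      ≤ (A (π.symm k) \ (Finset.univ.filter (fun t => t < π.symm k)).biUnion A).card := by
    intro k
    have h1 : (f k \ G).card ≤
        (f k \ (Finset.univ.filter (fun t => t < π.symm k)).biUnion A).card := by
      apply Finset.card_le_card
      apply Finset.sdiff_subset_sdiff le_rfl
      intro x hx
      rw [hG]
      simp only [Finset.mem_biUnion, Finset.mem_filter] at hx
      obtain ⟨i, _, hi⟩ := hx
      exact Finset.mem_biUnion.2 ⟨i, Finset.mem_univ _, hi⟩
    refine h1.trans ?_
    have := hgreedy (π.symm k) (π.symm k) le_rfl (f k) (by rw [Equiv.apply_symm_apply]; exact hf k)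
    exact this
  have hsdiff : ((Finset.univ.biUnion f) \ G).card ≤ G.card := by
    calc ((Finset.univ.biUnion f) \ G).card
        ≤ ∑ k : Fin p, (f k \ G).card := by
          refine le_trans (Finset.card_le_card ?_) Finset.card_biUnion_le
          intro x hx
          rw [Finset.mem_sdiff, Finset.mem_biUnion] at hx
          obtain ⟨⟨k, hk, hxk⟩, hxG⟩ := hx
          exact Finset.mem_biUnion.2 ⟨k, hk, Finset.mem_sdiff.2 ⟨hxk, hxG⟩⟩
      _ ≤ ∑ k : Fin p, (A (π.symm k) \ (Finset.univ.filter (fun t => t < π.symm k)).biUnion A).card :=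
          Finset.sum_le_sum (fun k _ => hkey k)
      _ = ∑ i : Fin p, (A i \ (Finset.univ.filter (fun t => t < i)).biUnion A).card :=
          Equiv.sum_comp π.symm (fun i => (A i \ (Finset.univ.filter (fun t => t < i)).biUnion A).card)
      _ = G.card := hGsum.symm
  have : (Finset.univ.biUnion f).card ≤ ((Finset.univ.biUnion f) \ G).card + G.card :=
    Finset.card_le_card_sdiff_add_card
  omega
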